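/- For m ≥ 2, the complete multipartite graph K_{2*m} (m parts each of size 2) is not proportionally m-choosable. -/

import Mathlib

open Finset

/-- The multiplicity of a color `c` in a list assignment `L`: the number of
vertices whose list contains `c`. -/
def eta {V : Type*} [Fintype V] (L : V → Finset ℕ) (c : ℕ) : ℕ :=
  (Finset.univ.filter fun v => c ∈ L v).card

/-- `f` is a proportional `L`-coloring of `G` (with lists of size `k`): a proper
`L`-coloring in which each color `c` of the palette is used `⌊η(c)/k⌋` or `⌈η(c)/k⌉` times. -/
def IsProportionalColoring {V : Type*} [Fintype V] (G : SimpleGraph V) (k : ℕ)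
    (L : V → Finset ℕ) (f : V → ℕ) : Prop :=
  (∀ v, f v ∈ L v) ∧ (∀ u v, G.Adj u v → f u ≠ f v) ∧
  ∀ c, (∃ v, c ∈ L v) →
    (Finset.univ.filter fun v => f v = c).card = eta L c / k ∨
    (Finset.univ.filter fun v => f v = c).card = (eta L c + k - 1) / k

/-- `G` is proportionally `k`-choosable: every `k`-assignment admits a proportional coloring. -/
def ProportionallyChoosable {V : Type*} [Fintype V] (G : SimpleGraph V) (k : ℕ) : Prop :=
  ∀ L : V → Finset ℕ, (∀ v, (L v).card = k) → ∃ f : V → ℕ, IsProportionalColoring G k L f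

/-- The complete multipartite graph `K_{2*m}`: `m` parts, each of size 2;
vertices are adjacent iff they lie in different parts. -/
def Ktwom (m : ℕ) : SimpleGraph (Fin m × Fin 2) where
  Adj u v := u.1 ≠ v.1
  symm := ⟨fun u v h => Ne.symm h⟩
  loopless := ⟨fun u h => h rfl⟩

lemma part_eq_cases {m : ℕ} (v : Fin m × Fin 2) (j : Fin m) (h : v.1 = j) :
    v = (j, 0) ∨ v = (j, 1) := by
  obtain ⟨v1, v2⟩ := v
  simp only at h
  subst h
  fin_cases v2
  · left; rfl
  · right; rfl

theorem stmt_11 (m : ℕ) (hm : 2 ≤ m) : ¬ ProportionallyChoosable (Ktwom m) m := by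
  classical
  intro H
  set base : Finset ℕ := (Finset.range (m-1)).image Nat.succ with hbase
  set L : Fin m × Fin 2 → Finset ℕ := fun v => insert (m + v.1.val) base with hLdef
  have hbase_mem : ∀ c, c ∈ base ↔ 1 ≤ c ∧ c ≤ m - 1 := by
    intro c
    simp only [hbase, Finset.mem_image, Finset.mem_range, Nat.succ_eq_add_one]
    constructor
    · rintro ⟨t, ht, rfl⟩; omega
    · intro h; exact ⟨c - 1, by omega, by omega⟩
  have hmemL : ∀ (v : Fin m × Fin 2) (c : ℕ),
      c ∈ L v ↔ c = m + v.1.val ∨ (1 ≤ c ∧ c ≤ m - 1) := by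
    intro v c
    simp only [hLdef, Finset.mem_insert, hbase_mem]
  have hLcard : ∀ v, (L v).card = m := by
    intro v
    have hnot : m + v.1.val ∉ base := by rw [hbase_mem]; omega
    rw [hLdef]
    simp only []
    rw [Finset.card_insert_of_notMem hnot, hbase,
      Finset.card_image_of_injective _ Nat.succ_injective, Finset.card_range]
    omega
  obtain ⟨f, hf1, hf2, hf3⟩ := H L hLcard
  have hadj : ∀ u v : Fin m × Fin 2, u.1 ≠ v.1 → f u ≠ f v := fun u v h => hf2 u v h
  have hcard_univ : (Finset.univ : Finset (Fin m × Fin 2)).card = 2 * m := by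
    simp [Fintype.card_prod]; ring
  -- each small color 1..m-1 is used exactly twice
  have hcount1 : ∀ c, 1 ≤ c → c ≤ m - 1 →
      (Finset.univ.filter fun v => f v = c).card = 2 := by
    intro c h1 h2
    have heta : eta L c = 2 * m := by
      unfold eta
      rw [Finset.filter_true_of_mem, hcard_univ]
      intro v _
      rw [hmemL]
      right; exact ⟨h1, h2⟩
    have hex : ∃ v : Fin m × Fin 2, c ∈ L v := by
      refine ⟨(⟨0, by omega⟩, 0), ?_⟩
      rw [hmemL]; right; exact ⟨h1, h2⟩
    rcases hf3 c hex with h | h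
    · rw [h, heta, Nat.mul_div_cancel _ (by omega)]
    · rw [h, heta]
      exact Nat.div_eq_of_lt_le (by omega) (by omega)
  -- each special color m+j is used at most once
  have hcount2 : ∀ j : Fin m, (Finset.univ.filter fun v => f v = m + j.val).card ≤ 1 := by
    intro j
    have heta : eta L (m + j.val) = 2 := by
      unfold eta
      have hE : (Finset.univ.filter fun v : Fin m × Fin 2 => (m + j.val) ∈ L v)
          = ({(j, 0), (j, 1)} : Finset (Fin m × Fin 2)) := by
        ext v
        simp only [Finset.mem_filter, Finset.mem_univ, true_and, hmemL,
          Finset.mem_insert, Finset.mem_singleton]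
        constructor
        · rintro (h | h)
          · have hv : v.1 = j := by apply Fin.ext; omega
            exact part_eq_cases v j hv
          · omega
        · rintro (rfl | rfl) <;> left <;> rfl
      rw [hE, Finset.card_insert_of_notMem (by simp), Finset.card_singleton]
    have hex : ∃ v : Fin m × Fin 2, (m + j.val) ∈ L v := by
      refine ⟨(j, 0), ?_⟩
      rw [hmemL]; left; rfl
    rcases hf3 (m + j.val) hex with h | h
    · rw [h, heta]
      have := Nat.div_lt_self (show 0 < 2 by norm_num) (show 1 < m by omega)
      omega
    · rw [h, heta]
      have : (2 + m - 1) / m < 2 := (Nat.div_lt_iff_lt_mul (by omega)).2 (by omega)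
      omega
  -- each small color is used on both vertices of a single part
  have hpair : ∀ c : ℕ, ∃ p : Fin m, (1 ≤ c ∧ c ≤ m - 1) →
      f (p, 0) = c ∧ f (p, 1) = c := by
    intro c
    by_cases hc : 1 ≤ c ∧ c ≤ m - 1
    · obtain ⟨x, y, hxy, hset⟩ := Finset.card_eq_two.mp (hcount1 c hc.1 hc.2)
      have hx : f x = c := by
        have : x ∈ Finset.univ.filter fun v => f v = c := by rw [hset]; simp
        simpa using this
      have hy : f y = c := by
        have : y ∈ Finset.univ.filter fun v => f v = c := by rw [hset]; simp
        simpa using this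
      have hpart : x.1 = y.1 := by
        by_contra h
        exact hadj x y h (hx.trans hy.symm)
      refine ⟨x.1, fun _ => ?_⟩
      have h0 : (x.1, (0 : Fin 2)) = x ∨ (x.1, (0 : Fin 2)) = y := by
        rcases part_eq_cases x x.1 rfl with h | h
        · left; exact h.symm
        · rcases part_eq_cases y x.1 hpart.symm with h' | h'
          · right; exact h'.symm
          · exfalso; exact hxy (h.trans h'.symm)
      have h1 : (x.1, (1 : Fin 2)) = x ∨ (x.1, (1 : Fin 2)) = y := by
        rcases part_eq_cases x x.1 rfl with h | h
        · rcases part_eq_cases y x.1 hpart.symm with h' | h'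
          · exfalso; exact hxy (h.trans h'.symm)
          · right; exact h'.symm
        · left; exact h.symm
      constructor
      · rcases h0 with h | h <;> rw [h] <;> assumption
      · rcases h1 with h | h <;> rw [h] <;> assumption
    · exact ⟨⟨0, by omega⟩, fun h => absurd h hc⟩
  choose pt hpt using hpair
  set P : Finset (Fin m) := (Finset.Icc 1 (m-1)).image pt with hP
  have hPnotmem : ∀ v : Fin m × Fin 2, f v = m + v.1.val → v.1 ∉ P := by
    intro v hv hmem
    rw [hP, Finset.mem_image] at hmem
    obtain ⟨c, hc, hcv⟩ := hmem
    rw [Finset.mem_Icc] at hc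
    have hpc := hpt c hc
    have hfv : f v = c := by
      rcases part_eq_cases v v.1 rfl with h | h
      · rw [h, ← hcv]; exact hpc.1
      · rw [h, ← hcv]; exact hpc.2
    omega
  have hPcard : P.card = m - 1 := by
    rw [hP, Finset.card_image_of_injOn, Nat.card_Icc]
    · omega
    · intro c hc c' hc' hcc
      simp only [Finset.coe_Icc, Set.mem_Icc] at hc hc'
      have h1 := (hpt c hc).1
      have h2 := (hpt c' hc').1
      rw [hcc] at h1
      omega
  -- the set of vertices not colored with a small color
  set A : Finset (Fin m × Fin 2) :=
    Finset.univ.filter (fun v => ¬(1 ≤ f v ∧ f v ≤ m - 1)) with hA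
  have hAspec : ∀ v ∈ A, f v = m + v.1.val := by
    intro v hv
    rw [hA, Finset.mem_filter] at hv
    have := hf1 v
    rw [hmemL] at this
    tauto
  have hAcard : A.card = 2 := by
    have hB : (Finset.univ.filter (fun v : Fin m × Fin 2 => 1 ≤ f v ∧ f v ≤ m - 1))
        = (Finset.Icc 1 (m-1)).biUnion
            (fun c => Finset.univ.filter fun v => f v = c) := by
      ext v
      simp only [Finset.mem_filter, Finset.mem_univ, true_and, Finset.mem_biUnion,
        Finset.mem_Icc]
      constructor
      · intro h; exact ⟨f v, h, rfl⟩
      · rintro ⟨c, hc, rfl⟩; exact hc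
    have hdisj : ∀ c ∈ Finset.Icc 1 (m-1), ∀ c' ∈ Finset.Icc 1 (m-1), c ≠ c' →
        Disjoint (Finset.univ.filter fun v : Fin m × Fin 2 => f v = c)
          (Finset.univ.filter fun v : Fin m × Fin 2 => f v = c') := by
      intro c _ c' _ hcc
      simp only [Finset.disjoint_left, Finset.mem_filter]
      rintro v ⟨_, rfl⟩ ⟨_, h⟩
      exact hcc h
    have hsum : ∀ c ∈ Finset.Icc 1 (m-1),
        (Finset.univ.filter fun v : Fin m × Fin 2 => f v = c).card = 2 := by
      intro c hc
      rw [Finset.mem_Icc] at hc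
      exact hcount1 c hc.1 hc.2
    have hBcard : (Finset.univ.filter
        (fun v : Fin m × Fin 2 => 1 ≤ f v ∧ f v ≤ m - 1)).card = 2 * (m - 1) := by
      rw [hB, Finset.card_biUnion hdisj, Finset.sum_congr rfl hsum,
        Finset.sum_const, Nat.card_Icc, smul_eq_mul]
      omega
    have := Finset.card_filter_add_card_filter_not
      (s := (Finset.univ : Finset (Fin m × Fin 2)))
      (p := fun v => 1 ≤ f v ∧ f v ≤ m - 1)
    rw [hBcard, hcard_univ] at this
    rw [hA]
    omega
  obtain ⟨x, y, hxy, hAxy⟩ := Finset.card_eq_two.mp hAcard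
  have hxA : x ∈ A := by rw [hAxy]; simp
  have hyA : y ∈ A := by rw [hAxy]; simp
  have hfx := hAspec x hxA
  have hfy := hAspec y hyA
  by_cases hcase : x.1 = y.1
  · -- special color m + x.1 used twice
    have hsub : ({x, y} : Finset (Fin m × Fin 2)) ⊆
        Finset.univ.filter fun v => f v = m + x.1.val := by
      intro z hz
      simp only [Finset.mem_insert, Finset.mem_singleton] at hz
      simp only [Finset.mem_filter, Finset.mem_univ, true_and]
      rcases hz with rfl | rfl
      · exact hfx
      · rw [hfy, hcase]
    have h2 : 2 ≤ (Finset.univ.filter fun v => f v = m + x.1.val).card := by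
      calc 2 = ({x, y} : Finset (Fin m × Fin 2)).card := (Finset.card_pair hxy).symm
        _ ≤ _ := Finset.card_le_card hsub
    have := hcount2 x.1
    omega
  · -- m + 1 distinct parts
    have hxP := hPnotmem x hfx
    have hyP := hPnotmem y hfy
    have hbig : (insert x.1 (insert y.1 P)).card = m + 1 := by
      rw [Finset.card_insert_of_notMem (by simp [hcase, hxP]),
        Finset.card_insert_of_notMem hyP, hPcard]
      omega
    have hle : (insert x.1 (insert y.1 P)).card ≤ m := by
      have h := Finset.card_le_univ (insert x.1 (insert y.1 P))
      simpa using h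
    omega
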